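/- In the shared backup case, if a feasible solution for the second connection exists (p_2 and b_2 edge-disjoint from p_1 and b_1), then its minimum achievable failure probability is at most the minimum achievable in the unavoidable first backup case: P_f(p_2 ∩ b_2) over bridges of G_2 is bounded above by P_f(p'_2 ∩ b'_2) + P_f(p_1 − b_1) for any feasible paths in the other case, since every bridge of G_2 = G − p_1 − b_1 separating s_2 from t_2 is also a bridge of G_1 = G − p_1. -/
import Mathlib


open scoped Classical

/-- Comparison of the shared backup and unavoidable first backup cases.
Let `G₁ = G − p₁` and `G₂ = G₁ − b₁` (with `p₁`, `b₁` edge-disjoint), and assume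
`s₂`, `t₂` are still connected in `G₂` (the shared backup case is feasible).
Then every bridge separating `s₂` from `t₂` in `G₁` is also a bridge separating
`s₂` from `t₂` in `G₂`, and any feasible pair `p'`, `b'` of the unavoidable first
backup case (paths in `G₁`) has failure probability
`P_f(p' ∩ b') + P_f(p₁ − b₁)` at least the bridge-sum of `G₁`, which is the
minimum achievable failure probability of the shared backup case. -/
theorem stmt_14 {V : Type*} [Fintype V] (G : SimpleGraph V)
    (P : Sym2 V → ℝ) (hP0 : ∀ e, 0 ≤ P e)
    {s₁ t₁ s₂ t₂ : V} (p₁ b₁ : G.Walk s₁ t₁)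
    (hd : List.Disjoint p₁.edges b₁.edges)
    (G₁ G₂ : SimpleGraph V)
    (hG₁ : G₁ = G.deleteEdges {e : Sym2 V | e ∈ p₁.edges})
    (hG₂ : G₂ = G₁.deleteEdges {e : Sym2 V | e ∈ b₁.edges})
    (hreach : G₂.Reachable s₂ t₂) :
    ({e : Sym2 V | e ∈ G₁.edgeSet ∧ ¬ (G₁.deleteEdges {e}).Reachable s₂ t₂}
        ⊆ {e : Sym2 V | e ∈ G₂.edgeSet ∧ ¬ (G₂.deleteEdges {e}).Reachable s₂ t₂})
    ∧ ∀ p' b' : G₁.Walk s₂ t₂,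
        (∑ e ∈ Finset.univ.filter
            (fun e => e ∈ G₁.edgeSet ∧ ¬ (G₁.deleteEdges {e}).Reachable s₂ t₂), P e)
          ≤ (∑ e ∈ p'.edges.toFinset ∩ b'.edges.toFinset, P e)
            + ∑ e ∈ p₁.edges.toFinset \ b₁.edges.toFinset, P e := by
  have hle : G₂ ≤ G₁ := by
    subst hG₂; exact SimpleGraph.deleteEdges_le _
  constructor
  · rintro e ⟨he, hnr⟩
    have heb : e ∉ b₁.edges := by
      intro hb
      apply hnr
      refine hreach.mono ?_
      intro a c hac
      rw [hG₂, SimpleGraph.deleteEdges_adj] at hac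
      rw [SimpleGraph.deleteEdges_adj]
      refine ⟨hac.1, ?_⟩
      simp only [Set.mem_singleton_iff]
      intro hEq
      exact hac.2 (hEq ▸ hb)
    refine ⟨?_, ?_⟩
    · rw [hG₂, SimpleGraph.edgeSet_deleteEdges]
      exact ⟨he, heb⟩
    · intro hr
      apply hnr
      refine hr.mono ?_
      intro a c hac
      rw [SimpleGraph.deleteEdges_adj] at hac ⊢
      exact ⟨hle hac.1, hac.2⟩
  · intro p' b'
    have key : ∀ (w : G₁.Walk s₂ t₂) e, e ∈ G₁.edgeSet →
        ¬ (G₁.deleteEdges {e}).Reachable s₂ t₂ → e ∈ w.edges := by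
      intro w e _ hnr
      by_contra hew
      apply hnr
      exact ⟨w.toDeleteEdges {e} (by intro e' he' hmem; simp only [Set.mem_singleton_iff] at hmem; exact hew (hmem ▸ he'))⟩
    have hsub : (Finset.univ.filter
        (fun e => e ∈ G₁.edgeSet ∧ ¬ (G₁.deleteEdges {e}).Reachable s₂ t₂))
        ⊆ p'.edges.toFinset ∩ b'.edges.toFinset := by
      intro e he
      simp only [Finset.mem_filter] at he
      simp only [Finset.mem_inter, List.mem_toFinset]
      exact ⟨key p' e he.2.1 he.2.2, key b' e he.2.1 he.2.2⟩
    have h1 : (∑ e ∈ Finset.univ.filter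
        (fun e => e ∈ G₁.edgeSet ∧ ¬ (G₁.deleteEdges {e}).Reachable s₂ t₂), P e)
        ≤ ∑ e ∈ p'.edges.toFinset ∩ b'.edges.toFinset, P e :=
      Finset.sum_le_sum_of_subset_of_nonneg hsub (fun e _ _ => hP0 e)
    have h2 : (0:ℝ) ≤ ∑ e ∈ p₁.edges.toFinset \ b₁.edges.toFinset, P e :=
      Finset.sum_nonneg (fun e _ => hP0 e)
    linarith
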